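/- For real γ > -1 and a positive integer μ, as k → ∞ (k real, positive), ∫₀^∞ s^γ ln^μ(s) e^{-ks} ds is asymptotically equivalent to (-1)^μ Γ(γ+1) ln^μ(k) / k^{γ+1}. -/

import Mathlib

open MeasureTheory Real Filter Asymptotics Set Finset

/-- Integrability of `t ^ γ * (log t) ^ j * exp (-t)` on `(0, ∞)` for `γ > -1`. -/
lemma aux_integrable (γ : ℝ) (hγ : γ > -1) (j : ℕ) :
    IntegrableOn (fun t : ℝ => t ^ γ * (Real.log t) ^ j * Real.exp (-t)) (Set.Ioi 0) := by
  have hcont : ContinuousOn (fun t : ℝ => t ^ γ * (Real.log t) ^ j * Real.exp (-t))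
      (Set.Ioi 0) := by
    refine ContinuousOn.mul (ContinuousOn.mul ?_ ?_) ?_
    · exact fun x hx =>
        (Real.continuousAt_rpow_const x γ (Or.inl (ne_of_gt hx))).continuousWithinAt
    · exact (Real.continuousOn_log.mono fun x hx => ne_of_gt hx).pow j
    · exact (continuous_exp.comp continuous_neg).continuousOn
  rw [← Ioc_union_Ioi_eq_Ioi (zero_le_one : (0 : ℝ) ≤ 1), integrableOn_union]
  constructor
  · -- on (0, 1]
    set δ : ℝ := (γ + 1) / (2 * (j + 1)) with hδdef
    have hδ : 0 < δ := by
      apply div_pos (by linarith) (by positivity)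
    have hγ' : -1 < γ - δ * j := by
      have h1 : δ * j < δ * (j + 1) := by
        have := hδ
        nlinarith
      have h2 : δ * (j + 1) = (γ + 1) / 2 := by
        rw [hδdef, div_mul_eq_mul_div, div_eq_div_iff (by positivity) (by norm_num)]
        ring
      nlinarith
    have hint : IntegrableOn (fun t : ℝ => δ⁻¹ ^ j * t ^ (γ - δ * j)) (Set.Ioc 0 1) := by
      refine Integrable.const_mul ?_ _
      exact (intervalIntegrable_iff_integrableOn_Ioc_of_le zero_le_one).mp
        (intervalIntegral.intervalIntegrable_rpow' hγ')
    refine Integrable.mono' hint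
      ((hcont.mono Ioc_subset_Ioi_self).aestronglyMeasurable measurableSet_Ioc) ?_
    rw [ae_restrict_iff' measurableSet_Ioc]
    refine ae_of_all _ fun t ht => ?_
    have ht0 : 0 < t := ht.1
    have hlog : |Real.log t| ≤ t ^ (-δ) / δ := by
      have h1 : Real.log t⁻¹ ≤ (t⁻¹) ^ δ / δ := Real.log_le_rpow_div (by positivity) hδ
      have h2 : (t⁻¹ : ℝ) ^ δ = t ^ (-δ) := by
        rw [← Real.rpow_neg_one t, ← Real.rpow_mul ht0.le]; norm_num
      rw [abs_of_nonpos (Real.log_nonpos ht0.le ht.2), ← Real.log_inv]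
      rw [h2] at h1
      exact h1
    have key : t ^ γ * (t ^ (-δ) / δ) ^ j = δ⁻¹ ^ j * t ^ (γ - δ * j) := by
      rw [div_pow, ← Real.rpow_natCast (t ^ (-δ)) j, ← Real.rpow_mul ht0.le,
        div_eq_mul_inv, ← inv_pow, show γ - δ * j = γ + -δ * j by ring,
        Real.rpow_add ht0]
      ring
    calc ‖t ^ γ * Real.log t ^ j * Real.exp (-t)‖
        = t ^ γ * |Real.log t| ^ j * Real.exp (-t) := by
          rw [norm_eq_abs, abs_mul, abs_mul, abs_pow, abs_of_nonneg (Real.rpow_nonneg ht0.le γ),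
            abs_of_nonneg (Real.exp_nonneg _)]
      _ ≤ t ^ γ * (t ^ (-δ) / δ) ^ j * 1 := by
          refine mul_le_mul (mul_le_mul le_rfl ?_ (by positivity) (by positivity))
            (Real.exp_le_one_iff.mpr (by linarith)) (Real.exp_nonneg _) (by positivity)
          exact pow_le_pow_left₀ (abs_nonneg _) hlog j
      _ = δ⁻¹ ^ j * t ^ (γ - δ * j) := by rw [mul_one, key]
  · -- on (1, ∞)
    have hint : IntegrableOn (fun t : ℝ => Real.exp (-t) * t ^ (γ + j)) (Set.Ioi 1) := by
      have := Real.GammaIntegral_convergent (s := γ + j + 1)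
        (by have : (0:ℝ) ≤ j := Nat.cast_nonneg j; linarith)
      simpa using this.mono_set (Ioi_subset_Ioi zero_le_one)
    refine Integrable.mono' hint
      ((hcont.mono (Ioi_subset_Ioi zero_le_one)).aestronglyMeasurable measurableSet_Ioi) ?_
    rw [ae_restrict_iff' measurableSet_Ioi]
    refine ae_of_all _ fun t ht => ?_
    have ht1 : (1 : ℝ) < t := ht
    have ht0 : (0 : ℝ) < t := lt_trans one_pos ht1
    have hlog : |Real.log t| ≤ t := by
      rw [abs_of_nonneg (Real.log_nonneg ht1.le)]
      exact Real.log_le_self ht0.le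
    calc ‖t ^ γ * Real.log t ^ j * Real.exp (-t)‖
        = t ^ γ * |Real.log t| ^ j * Real.exp (-t) := by
          rw [norm_eq_abs, abs_mul, abs_mul, abs_pow, abs_of_nonneg (Real.rpow_nonneg ht0.le γ),
            abs_of_nonneg (Real.exp_nonneg _)]
      _ ≤ t ^ γ * t ^ j * Real.exp (-t) := by
          refine mul_le_mul_of_nonneg_right
            (mul_le_mul_of_nonneg_left (pow_le_pow_left₀ (abs_nonneg _) hlog j)
              (by positivity)) (Real.exp_nonneg _)
      _ = Real.exp (-t) * t ^ (γ + j) := by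
          rw [← Real.rpow_natCast t j, ← Real.rpow_add ht0]; ring

/-- For real `γ > -1` and a positive integer `μ`, as `k → ∞`,
`∫₀^∞ s^γ (ln s)^μ e^{-ks} ds ~ (-1)^μ Γ(γ+1) (ln k)^μ / k^(γ+1)`. -/
theorem integral_rpow_log_pow_exp_isEquivalent (γ : ℝ) (μ : ℕ) (hγ : γ > -1)
    (hμ : 1 ≤ μ) :
    (fun k : ℝ => ∫ s in Set.Ioi (0 : ℝ),
        s ^ γ * (Real.log s) ^ μ * Real.exp (-k * s)) ~[atTop]
      (fun k : ℝ =>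
        (-1 : ℝ) ^ μ * Real.Gamma (γ + 1) * (Real.log k) ^ μ / k ^ (γ + 1)) := by
  set c : ℕ → ℝ := fun m => ∫ t in Set.Ioi (0 : ℝ),
    t ^ γ * (Real.log t) ^ m * Real.exp (-t) with hc
  have hΓpos : 0 < Real.Gamma (γ + 1) := Real.Gamma_pos_of_pos (by linarith)
  have hc0 : c 0 = Real.Gamma (γ + 1) := by
    rw [Real.Gamma_eq_integral (by linarith : (0:ℝ) < γ + 1)]
    refine setIntegral_congr_fun measurableSet_Ioi fun t ht => ?_
    simp only [pow_zero, mul_one, add_sub_cancel_right]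
    ring
  set a : ℕ → ℝ := fun m => (-1 : ℝ) ^ (m + μ) * (μ.choose m) * c m with ha
  -- the substituted integral
  have hG : ∀ k : ℝ, 0 < k →
      (∫ t in Set.Ioi (0 : ℝ), (t / k) ^ γ * (Real.log (t / k)) ^ μ * Real.exp (-t)) =
        ∑ m ∈ Finset.range (μ + 1), a m * (Real.log k) ^ (μ - m) / k ^ γ := by
    intro k hk
    have step1 : (∫ t in Set.Ioi (0 : ℝ),
        (t / k) ^ γ * (Real.log (t / k)) ^ μ * Real.exp (-t)) =
        ∫ t in Set.Ioi (0 : ℝ), ∑ m ∈ Finset.range (μ + 1),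
          ((-1 : ℝ) ^ (m + μ) * (μ.choose m) * (Real.log k) ^ (μ - m) / k ^ γ) *
            (t ^ γ * (Real.log t) ^ m * Real.exp (-t)) := by
      refine setIntegral_congr_fun measurableSet_Ioi fun t ht => ?_
      have ht0 : (0 : ℝ) < t := ht
      rw [Real.div_rpow ht0.le hk.le, Real.log_div ht0.ne' hk.ne', sub_pow,
        Finset.mul_sum, Finset.sum_mul]
      refine Finset.sum_congr rfl fun m _ => ?_
      ring
    rw [step1, integral_finset_sum]
    · refine Finset.sum_congr rfl fun m _ => ?_
      rw [MeasureTheory.integral_const_mul]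
      rw [ha]
      ring
    · intro m _
      exact (aux_integrable γ hγ m).const_mul _
  -- the formula for the original integral for positive k
  have hf : ∀ k : ℝ, 0 < k →
      (∫ s in Set.Ioi (0 : ℝ), s ^ γ * (Real.log s) ^ μ * Real.exp (-k * s)) =
        ∑ m ∈ Finset.range (μ + 1), a m * (Real.log k) ^ (μ - m) / k ^ (γ + 1) := by
    intro k hk
    have hsub := MeasureTheory.integral_comp_mul_left_Ioi
      (fun t : ℝ => (t / k) ^ γ * (Real.log (t / k)) ^ μ * Real.exp (-t)) 0 hk
    simp only [mul_div_cancel_left₀ _ hk.ne', mul_zero, neg_mul, smul_eq_mul] at hsub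
    rw [show (fun s : ℝ => s ^ γ * (Real.log s) ^ μ * Real.exp (-k * s)) =
        (fun s : ℝ => s ^ γ * (Real.log s) ^ μ * Real.exp (-(k * s))) by
      funext s; rw [neg_mul], hsub, hG k hk, Finset.mul_sum]
    refine Finset.sum_congr rfl fun m _ => ?_
    rw [Real.rpow_add_one hk.ne' γ]
    ring
  have hev : ∀ᶠ k : ℝ in atTop, (1 : ℝ) < Real.log k ∧ 0 < k := by
    filter_upwards [eventually_gt_atTop (Real.exp 1)] with k hk
    have hk0 : 0 < k := lt_trans (Real.exp_pos 1) hk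
    refine ⟨?_, hk0⟩
    calc (1 : ℝ) = Real.log (Real.exp 1) := (Real.log_exp 1).symm
      _ < Real.log k := Real.log_lt_log (Real.exp_pos 1) hk
  have hgne : ∀ᶠ k : ℝ in atTop,
      ((-1 : ℝ) ^ μ * Real.Gamma (γ + 1) * (Real.log k) ^ μ / k ^ (γ + 1)) ≠ 0 := by
    filter_upwards [hev] with k ⟨hlk, hk0⟩
    have hL : (0 : ℝ) < Real.log k := lt_trans one_pos hlk
    have : (0 : ℝ) < k ^ (γ + 1) := Real.rpow_pos_of_pos hk0 _
    apply div_ne_zero _ this.ne'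
    exact mul_ne_zero (mul_ne_zero (pow_ne_zero _ (by norm_num)) hΓpos.ne') (pow_ne_zero _ hL.ne')
  rw [isEquivalent_iff_tendsto_one hgne]
  -- eventual formula for the ratio
  have heq : ((fun k : ℝ => ∫ s in Set.Ioi (0 : ℝ),
        s ^ γ * (Real.log s) ^ μ * Real.exp (-k * s)) /
      (fun k : ℝ =>
        (-1 : ℝ) ^ μ * Real.Gamma (γ + 1) * (Real.log k) ^ μ / k ^ (γ + 1)))
      =ᶠ[atTop] fun k : ℝ => ∑ m ∈ Finset.range (μ + 1),
        a m * ((Real.log k) ^ m)⁻¹ / ((-1 : ℝ) ^ μ * Real.Gamma (γ + 1)) := by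
    filter_upwards [hev] with k ⟨hlk, hk0⟩
    have hL : (0 : ℝ) < Real.log k := lt_trans one_pos hlk
    have hK : (0 : ℝ) < k ^ (γ + 1) := Real.rpow_pos_of_pos hk0 _
    simp only [Pi.div_apply]
    rw [hf k hk0, Finset.sum_div]
    refine Finset.sum_congr rfl fun m hm => ?_
    have hm' : m ≤ μ := Nat.lt_succ_iff.mp (Finset.mem_range.mp hm)
    have hLμ : (Real.log k) ^ μ = (Real.log k) ^ (μ - m) * (Real.log k) ^ m := by
      rw [← pow_add, Nat.sub_add_cancel hm']
    have h1 : ((-1 : ℝ) ^ μ) ≠ 0 := pow_ne_zero _ (by norm_num)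
    rw [hLμ]
    field_simp
  refine Tendsto.congr' heq.symm ?_
  have hlim : Tendsto (fun k : ℝ => ∑ m ∈ Finset.range (μ + 1),
      a m * ((Real.log k) ^ m)⁻¹ / ((-1 : ℝ) ^ μ * Real.Gamma (γ + 1))) atTop
      (nhds (∑ m ∈ Finset.range (μ + 1), if m = 0 then (1 : ℝ) else 0)) := by
    refine tendsto_finset_sum _ fun m _ => ?_
    rcases Nat.eq_zero_or_pos m with rfl | hm
    · have : (fun k : ℝ => a 0 * ((Real.log k) ^ 0)⁻¹ / ((-1 : ℝ) ^ μ * Real.Gamma (γ + 1))) =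
          fun _ : ℝ => (1 : ℝ) := by
        funext k
        simp only [pow_zero, inv_one, mul_one, ha, hc0, Nat.choose_zero_right, Nat.cast_one,
          zero_add]
        field_simp
      rw [this]
      simpa using tendsto_const_nhds
    · have hLtop : Tendsto (fun k : ℝ => (Real.log k) ^ m) atTop atTop :=
        (tendsto_pow_atTop hm.ne').comp Real.tendsto_log_atTop
      have : Tendsto (fun k : ℝ => a m * ((Real.log k) ^ m)⁻¹ /
          ((-1 : ℝ) ^ μ * Real.Gamma (γ + 1))) atTop
          (nhds (a m * 0 / ((-1 : ℝ) ^ μ * Real.Gamma (γ + 1)))) :=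
        ((hLtop.inv_tendsto_atTop).const_mul _).div_const _
      simpa [if_neg hm.ne', mul_zero, zero_div] using this
  have hsum : (∑ m ∈ Finset.range (μ + 1), if m = 0 then (1 : ℝ) else 0) = 1 := by
    rw [Finset.sum_ite_eq' (Finset.range (μ + 1)) 0 (fun _ => (1 : ℝ))]
    simp
  rwa [hsum] at hlim
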